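/- Let S be a finite set with |S| ≥ 2 and S⁺ = S ⊔ {+}. Let π : 𝕋_{S⁺} → 𝕋_S be the map sending an S⁺-tree 𝓣 to {V ∩ S : V ∈ 𝓣, |V ∩ S| ≥ 2}. Then for every S-tree 𝓣, the fiber π⁻¹(𝓣) has exactly 2·|𝓣| + |S| elements. -/

import Mathlib

set_option linter.unusedVariables false

variable {α : Type*} [DecidableEq α]

/-- A forest on `S`. -/
def IsForest (S : Finset α) (F : Finset (Finset α)) : Prop :=
  (∀ T ∈ F, T ⊆ S) ∧ (∀ T ∈ F, 2 ≤ T.card) ∧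
    ∀ U ∈ F, ∀ T ∈ F, U ⊆ T ∨ T ⊆ U ∨ U ∩ T = ∅

/-- An `S`-tree: a forest on `S` containing `S`. -/
def IsTree (S : Finset α) (F : Finset (Finset α)) : Prop :=
  IsForest S F ∧ S ∈ F

def fibS (p s : α) (Tr : Finset (Finset α)) : Finset (Finset α) :=
  Tr.filter (fun W => s ∉ W) ∪ (Tr.filter (fun W => s ∈ W)).image (insert p) ∪ {insert p {s}}

def fibT (p : α) (T : Finset α) (b : Bool) (Tr : Finset (Finset α)) : Finset (Finset α) :=
  Tr.filter (fun W => ¬ T ⊆ W) ∪ (Tr.filter (fun W => T ⊆ W)).image (insert p) ∪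
    (if b then {T} else ∅)

lemma mem_fibS {p s : α} {Tr : Finset (Finset α)} {V : Finset α} :
    V ∈ fibS p s Tr ↔ (V ∈ Tr ∧ s ∉ V) ∨ (∃ W ∈ Tr, s ∈ W ∧ V = insert p W) ∨
      V = insert p {s} := by
  simp [fibS, Finset.mem_union, Finset.mem_filter, Finset.mem_image, eq_comm, and_assoc]
  exact or_rotate

lemma mem_fibT {p : α} {T : Finset α} {b : Bool} {Tr : Finset (Finset α)} {V : Finset α} :
    V ∈ fibT p T b Tr ↔ (V ∈ Tr ∧ ¬ T ⊆ V) ∨ (∃ W ∈ Tr, T ⊆ W ∧ V = insert p W) ∨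
      (b = true ∧ V = T) := by
  cases b <;>
    simp [fibT, Finset.mem_union, Finset.mem_filter, Finset.mem_image, eq_comm, and_assoc] <;>
    exact or_rotate

lemma insert_inter_self {p : α} {S W : Finset α} (hp : p ∉ S) (hWS : W ⊆ S) :
    insert p W ∩ S = W := by
  rw [Finset.insert_inter_of_notMem hp, Finset.inter_eq_left.2 hWS]

lemma subset_of_subset_insert {p : α} {S V : Finset α} (hV : V ⊆ insert p S) (hpV : p ∉ V) :
    V ⊆ S := fun x hx => (Finset.mem_insert.1 (hV hx)).elim
    (fun h => absurd (h ▸ hx) hpV) id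

lemma eq_insert_inter {p : α} {S V : Finset α} (hV : V ⊆ insert p S) (hpV : p ∈ V) :
    V = insert p (V ∩ S) := by
  apply Finset.Subset.antisymm
  · intro x hx
    rcases Finset.mem_insert.1 (hV hx) with h | h
    · exact h ▸ Finset.mem_insert_self _ _
    · exact Finset.mem_insert_of_mem (Finset.mem_inter.2 ⟨hx, h⟩)
  · exact Finset.insert_subset hpV (Finset.inter_subset_left)

section Fiber

variable {S : Finset α} {p : α} (hp : p ∉ S) {Tr : Finset (Finset α)} (hTr : IsTree S Tr)
include hp hTr

lemma fibS_in_fiber (s : α) (hs : s ∈ S) :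
    IsTree (insert p S) (fibS p s Tr) ∧
      ((fibS p s Tr).filter fun V => 2 ≤ (V ∩ S).card).image (fun V => V ∩ S) = Tr := by
  obtain ⟨⟨hsub, hcard, hnest⟩, hStop⟩ := hTr
  have pnot : ∀ W ∈ Tr, p ∉ W := fun W hW h => hp (hsub W hW h)
  have hps : p ≠ s := fun h => hp (h ▸ hs)
  constructor
  · refine ⟨⟨?_, ?_, ?_⟩, ?_⟩
    · intro V hV
      rcases mem_fibS.1 hV with ⟨h1, _⟩ | ⟨W, hW, _, rfl⟩ | rfl
      · exact (hsub V h1).trans (Finset.subset_insert _ _)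
      · exact Finset.insert_subset_insert _ (hsub W hW)
      · exact Finset.insert_subset_insert _ (Finset.singleton_subset_iff.2 hs)
    · intro V hV
      rcases mem_fibS.1 hV with ⟨h1, _⟩ | ⟨W, hW, _, rfl⟩ | rfl
      · exact hcard V h1
      · exact le_trans (hcard W hW) (Finset.card_le_card (Finset.subset_insert _ _))
      · rw [Finset.card_insert_of_notMem (by simp [hps]), Finset.card_singleton]
    · intro V hV V' hV'
      rcases mem_fibS.1 hV with ⟨h1, h1s⟩ | ⟨W, hW, hsW, rfl⟩ | rfl <;>
        rcases mem_fibS.1 hV' with ⟨h1', h1s'⟩ | ⟨W', hW', hsW', rfl⟩ | rfl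
      · exact hnest V h1 V' h1'
      · rcases hnest V h1 W' hW' with h | h | h
        · exact Or.inl (h.trans (Finset.subset_insert _ _))
        · exact absurd (h hsW') h1s
        · refine Or.inr (Or.inr ?_)
          rw [Finset.inter_insert_of_notMem (pnot V h1), h]
      · refine Or.inr (Or.inr ?_)
        rw [Finset.inter_insert_of_notMem (pnot V h1),
          Finset.inter_singleton_of_notMem h1s]
      · rcases hnest W hW V' h1' with h | h | h
        · exact absurd (h hsW) h1s'
        · exact Or.inr (Or.inl (h.trans (Finset.subset_insert _ _)))
        · refine Or.inr (Or.inr ?_)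
          rw [Finset.insert_inter_of_notMem (pnot V' h1'), h]
      · rcases hnest W hW W' hW' with h | h | h
        · exact Or.inl (Finset.insert_subset_insert _ h)
        · exact Or.inr (Or.inl (Finset.insert_subset_insert _ h))
        · exact absurd (Finset.mem_inter.2 ⟨hsW, hsW'⟩) (by simp [h])
      · exact Or.inr (Or.inl (Finset.insert_subset_insert _
          (Finset.singleton_subset_iff.2 hsW)))
      · refine Or.inr (Or.inr ?_)
        rw [Finset.insert_inter_of_notMem (pnot V' h1'),
          Finset.singleton_inter_of_notMem h1s']
      · exact Or.inl (Finset.insert_subset_insert _ (Finset.singleton_subset_iff.2 hsW'))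
      · exact Or.inl (Finset.Subset.refl _)
    · exact mem_fibS.2 (Or.inr (Or.inl ⟨S, hStop, hs, rfl⟩))
  · apply Finset.Subset.antisymm
    · intro W hW
      obtain ⟨V, hV, rfl⟩ := Finset.mem_image.1 hW
      obtain ⟨hV, hVc⟩ := Finset.mem_filter.1 hV
      rcases mem_fibS.1 hV with ⟨h1, _⟩ | ⟨W', hW', _, rfl⟩ | rfl
      · rwa [Finset.inter_eq_left.2 (hsub V h1)]
      · rwa [insert_inter_self hp (hsub W' hW')]
      · rw [insert_inter_self hp (Finset.singleton_subset_iff.2 hs)] at hVc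
        simp at hVc
    · intro W hW
      by_cases hsW : s ∈ W
      · refine Finset.mem_image.2 ⟨insert p W, Finset.mem_filter.2 ⟨?_, ?_⟩, ?_⟩
        · exact mem_fibS.2 (Or.inr (Or.inl ⟨W, hW, hsW, rfl⟩))
        · rw [insert_inter_self hp (hsub W hW)]; exact hcard W hW
        · exact insert_inter_self hp (hsub W hW)
      · refine Finset.mem_image.2 ⟨W, Finset.mem_filter.2 ⟨?_, ?_⟩, ?_⟩
        · exact mem_fibS.2 (Or.inl ⟨hW, hsW⟩)
        · rw [Finset.inter_eq_left.2 (hsub W hW)]; exact hcard W hW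
        · exact Finset.inter_eq_left.2 (hsub W hW)

lemma fibT_in_fiber (T : Finset α) (hT : T ∈ Tr) (b : Bool) :
    IsTree (insert p S) (fibT p T b Tr) ∧
      ((fibT p T b Tr).filter fun V => 2 ≤ (V ∩ S).card).image (fun V => V ∩ S) = Tr := by
  obtain ⟨⟨hsub, hcard, hnest⟩, hStop⟩ := hTr
  have pnot : ∀ W ∈ Tr, p ∉ W := fun W hW h => hp (hsub W hW h)
  have hTne : T.Nonempty := Finset.card_pos.1 (lt_of_lt_of_le two_pos (hcard T hT))
  constructor
  · refine ⟨⟨?_, ?_, ?_⟩, ?_⟩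
    · intro V hV
      rcases mem_fibT.1 hV with ⟨h1, _⟩ | ⟨W, hW, _, rfl⟩ | ⟨_, rfl⟩
      · exact (hsub V h1).trans (Finset.subset_insert _ _)
      · exact Finset.insert_subset_insert _ (hsub W hW)
      · exact (hsub _ hT).trans (Finset.subset_insert _ _)
    · intro V hV
      rcases mem_fibT.1 hV with ⟨h1, _⟩ | ⟨W, hW, _, rfl⟩ | ⟨_, rfl⟩
      · exact hcard V h1
      · exact le_trans (hcard W hW) (Finset.card_le_card (Finset.subset_insert _ _))
      · exact hcard _ hT
    · intro V hV V' hV'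
      rcases mem_fibT.1 hV with ⟨h1, h1s⟩ | ⟨W, hW, hsW, rfl⟩ | ⟨_, rfl⟩ <;>
        rcases mem_fibT.1 hV' with ⟨h1', h1s'⟩ | ⟨W', hW', hsW', rfl⟩ | ⟨_, rfl⟩
      · exact hnest V h1 V' h1'
      · rcases hnest V h1 W' hW' with h | h | h
        · exact Or.inl (h.trans (Finset.subset_insert _ _))
        · exact absurd (hsW'.trans h) h1s
        · refine Or.inr (Or.inr ?_)
          rw [Finset.inter_insert_of_notMem (pnot V h1), h]
      · exact hnest V h1 _ hT
      · rcases hnest W hW V' h1' with h | h | h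
        · exact absurd (hsW.trans h) h1s'
        · exact Or.inr (Or.inl (h.trans (Finset.subset_insert _ _)))
        · refine Or.inr (Or.inr ?_)
          rw [Finset.insert_inter_of_notMem (pnot V' h1'), h]
      · rcases hnest W hW W' hW' with h | h | h
        · exact Or.inl (Finset.insert_subset_insert _ h)
        · exact Or.inr (Or.inl (Finset.insert_subset_insert _ h))
        · exact absurd (Finset.mem_inter.2 ⟨hsW hTne.choose_spec, hsW' hTne.choose_spec⟩)
            (by simp [h])
      · exact Or.inr (Or.inl ((hsW.trans (Finset.subset_insert _ _))))
      · exact hnest _ hT V' h1'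
      · exact Or.inl (hsW'.trans (Finset.subset_insert _ _))
      · exact Or.inl (Finset.Subset.refl _)
    · exact mem_fibT.2 (Or.inr (Or.inl ⟨S, hStop, hsub T hT, rfl⟩))
  · apply Finset.Subset.antisymm
    · intro W hW
      obtain ⟨V, hV, rfl⟩ := Finset.mem_image.1 hW
      obtain ⟨hV, hVc⟩ := Finset.mem_filter.1 hV
      rcases mem_fibT.1 hV with ⟨h1, _⟩ | ⟨W', hW', _, rfl⟩ | ⟨_, rfl⟩
      · rwa [Finset.inter_eq_left.2 (hsub V h1)]
      · rwa [insert_inter_self hp (hsub W' hW')]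
      · rwa [Finset.inter_eq_left.2 (hsub _ hT)]
    · intro W hW
      by_cases hsW : T ⊆ W
      · refine Finset.mem_image.2 ⟨insert p W, Finset.mem_filter.2 ⟨?_, ?_⟩, ?_⟩
        · exact mem_fibT.2 (Or.inr (Or.inl ⟨W, hW, hsW, rfl⟩))
        · rw [insert_inter_self hp (hsub W hW)]; exact hcard W hW
        · exact insert_inter_self hp (hsub W hW)
      · refine Finset.mem_image.2 ⟨W, Finset.mem_filter.2 ⟨?_, ?_⟩, ?_⟩
        · exact mem_fibT.2 (Or.inl ⟨hW, hsW⟩)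
        · rw [Finset.inter_eq_left.2 (hsub W hW)]; exact hcard W hW
        · exact Finset.inter_eq_left.2 (hsub W hW)

lemma classify (U : Finset (Finset α)) (hU : IsTree (insert p S) U)
    (him : (U.filter fun V => 2 ≤ (V ∩ S).card).image (fun V => V ∩ S) = Tr) :
    (∃ s ∈ S, U = fibS p s Tr) ∨ ∃ T ∈ Tr, ∃ b : Bool, U = fibT p T b Tr := by
  obtain ⟨⟨husub, hucard, hunest⟩, hutop⟩ := hU
  obtain ⟨⟨hsub, hcard, hnest⟩, hStop⟩ := hTr
  have hmemTr : ∀ W, W ∈ Tr ↔ ∃ V ∈ U, 2 ≤ (V ∩ S).card ∧ V ∩ S = W := by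
    intro W
    rw [← him]
    simp [Finset.mem_image, Finset.mem_filter, and_assoc]
  have hNTr : ∀ V ∈ U, p ∉ V → V ∈ Tr := by
    intro V hV hpV
    have hVS : V ⊆ S := subset_of_subset_insert (husub V hV) hpV
    refine (hmemTr V).2 ⟨V, hV, ?_, Finset.inter_eq_left.2 hVS⟩
    rw [Finset.inter_eq_left.2 hVS]
    exact hucard V hV
  have hCTr : ∀ V ∈ U, 2 ≤ (V ∩ S).card → V ∩ S ∈ Tr :=
    fun V hV h => (hmemTr _).2 ⟨V, hV, h, rfl⟩
  have hCne : (U.filter (p ∈ ·)).Nonempty :=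
    ⟨insert p S, Finset.mem_filter.2 ⟨hutop, Finset.mem_insert_self _ _⟩⟩
  obtain ⟨M, hMmem, hMmin⟩ : ∃ M ∈ U.filter (p ∈ ·), ∀ x ∈ U.filter (p ∈ ·), ¬ x < M := by
    obtain ⟨M, hM⟩ := Finset.exists_minimal hCne
    exact ⟨M, hM.1, fun x hx hlt => lt_irrefl _ (lt_of_lt_of_le hlt (hM.2 hx hlt.le))⟩
  obtain ⟨hMU, hpM⟩ := Finset.mem_filter.1 hMmem
  have hMleast : ∀ V ∈ U, p ∈ V → M ⊆ V := by
    intro V hV hpV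
    rcases hunest M hMU V hV with h | h | h
    · exact h
    · rcases lt_or_eq_of_le (Finset.le_iff_subset.2 h) with h' | h'
      · exact absurd h' (hMmin V (Finset.mem_filter.2 ⟨hV, hpV⟩))
      · exact h' ▸ Finset.Subset.refl _
    · exact absurd (Finset.mem_inter.2 ⟨hpM, hpV⟩) (by simp [h])
  have hMins : M = insert p (M ∩ S) := eq_insert_inter (husub M hMU) hpM
  set D := M ∩ S with hDdef
  have hDS : D ⊆ S := Finset.inter_subset_right
  have hpD : p ∉ D := fun h => hp (hDS h)
  have hDne : D.Nonempty := by
    rcases Finset.eq_empty_or_nonempty D with h | h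
    · exfalso
      have := hucard M hMU
      rw [hMins, h] at this
      simp at this
    · exact h
  have hDM : D ⊆ M := Finset.inter_subset_left
  have k1' : ∀ V ∈ U, p ∉ V → D ⊆ V → V = D := by
    intro V hV hpV hDV
    rcases hunest V hV M hMU with h | h | h
    · refine Finset.Subset.antisymm (fun x hx => ?_) hDV
      rcases Finset.mem_insert.1 (hMins ▸ h hx) with h' | h'
      · exact absurd (h' ▸ hx) hpV
      · exact h'
    · exact absurd (h hpM) hpV
    · exact absurd (Finset.mem_inter.2 ⟨hDV hDne.choose_spec, hDM hDne.choose_spec⟩)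
        (by simp [h])
  have k2 : ∀ W ∈ Tr, D ⊂ W → insert p W ∈ U := by
    intro W hW hDW
    obtain ⟨V, hV, hVc, hVS⟩ := (hmemTr W).1 hW
    by_cases hpV : p ∈ V
    · have h := eq_insert_inter (husub V hV) hpV
      rw [hVS] at h
      exact h ▸ hV
    · have hVW : V = W := by
        rw [← hVS, Finset.inter_eq_left.2 (subset_of_subset_insert (husub V hV) hpV)]
      exact absurd (hVW ▸ k1' V hV hpV (hVW ▸ hDW.subset)) (hVW ▸ hDW.ne.symm)
  have k3 : ∀ V ∈ U, p ∈ V → V ≠ M → D ⊂ V ∩ S ∧ V ∩ S ∈ Tr := by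
    intro V hV hpV hne
    have h1 : D ⊆ V ∩ S := Finset.subset_inter (hDM.trans (hMleast V hV hpV)) hDS
    have h2 : D ≠ V ∩ S := fun h => hne (by rw [eq_insert_inter (husub V hV) hpV, ← h, ← hMins])
    have hlt : D ⊂ V ∩ S := Finset.ssubset_iff_subset_ne.2 ⟨h1, h2⟩
    have hc1 := Finset.card_lt_card hlt
    have hc2 := Finset.card_pos.2 hDne
    exact ⟨hlt, hCTr V hV (by omega)⟩
  by_cases hD2 : 2 ≤ D.card
  · have hDTr : D ∈ Tr := hCTr M hMU hD2
    refine Or.inr ⟨D, hDTr, if D ∈ U then true else false, ?_⟩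
    ext V
    rw [mem_fibT]
    constructor
    · intro hV
      by_cases hpV : p ∈ V
      · by_cases hVM : V = M
        · subst hVM
          exact Or.inr (Or.inl ⟨D, hDTr, Finset.Subset.refl _, hMins⟩)
        · obtain ⟨hlt, hWTr⟩ := k3 V hV hpV hVM
          exact Or.inr (Or.inl ⟨V ∩ S, hWTr, hlt.subset, eq_insert_inter (husub V hV) hpV⟩)
      · have hVTr := hNTr V hV hpV
        by_cases hDV : D ⊆ V
        · have hVD := k1' V hV hpV hDV
          refine Or.inr (Or.inr ⟨?_, hVD⟩)
          rw [if_pos (hVD ▸ hV)]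
        · exact Or.inl ⟨hVTr, hDV⟩
    · rintro (⟨hVTr, hnDV⟩ | ⟨W, hW, hDW, rfl⟩ | ⟨hb, rfl⟩)
      · obtain ⟨V', hV', hVc', hVS'⟩ := (hmemTr V).1 hVTr
        by_cases hpV' : p ∈ V'
        · exact absurd (hVS' ▸ Finset.subset_inter (hDM.trans (hMleast V' hV' hpV')) hDS) hnDV
        · have : V' = V := by
            rw [← hVS', Finset.inter_eq_left.2 (subset_of_subset_insert (husub V' hV') hpV')]
          exact this ▸ hV'
      · by_cases hDW' : D = W
        · rw [← hDW', ← hMins]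
          exact hMU
        · exact k2 W hW (Finset.ssubset_iff_subset_ne.2 ⟨hDW, hDW'⟩)
      · by_cases hDU : D ∈ U
        · exact hDU
        · rw [if_neg hDU] at hb
          exact absurd hb (by simp)
  · have hD1 : D.card = 1 := by
      have := Finset.card_pos.2 hDne
      omega
    obtain ⟨s, hsD⟩ := Finset.card_eq_one.1 hD1
    have hsS : s ∈ S := hDS (hsD ▸ Finset.mem_singleton_self s)
    refine Or.inl ⟨s, hsS, ?_⟩
    ext V
    rw [mem_fibS]
    constructor
    · intro hV
      by_cases hpV : p ∈ V
      · by_cases hVM : V = M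
        · subst hVM
          refine Or.inr (Or.inr ?_)
          rw [hMins, hsD]
        · obtain ⟨hlt, hWTr⟩ := k3 V hV hpV hVM
          exact Or.inr (Or.inl ⟨V ∩ S, hWTr,
            hlt.subset (hsD ▸ Finset.mem_singleton_self s),
            eq_insert_inter (husub V hV) hpV⟩)
      · have hVTr := hNTr V hV hpV
        refine Or.inl ⟨hVTr, fun hsV => ?_⟩
        have hVD := k1' V hV hpV (hsD ▸ Finset.singleton_subset_iff.2 hsV)
        have := hucard V hV
        rw [hVD, hD1] at this
        omega
    · rintro (⟨hVTr, hsV⟩ | ⟨W, hW, hsW, rfl⟩ | rfl)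
      · obtain ⟨V', hV', hVc', hVS'⟩ := (hmemTr V).1 hVTr
        by_cases hpV' : p ∈ V'
        · have hDV : D ⊆ V := hVS' ▸ Finset.subset_inter (hDM.trans (hMleast V' hV' hpV')) hDS
          exact absurd (hDV (hsD ▸ Finset.mem_singleton_self s)) hsV
        · have : V' = V := by
            rw [← hVS', Finset.inter_eq_left.2 (subset_of_subset_insert (husub V' hV') hpV')]
          exact this ▸ hV'
      · refine k2 W hW (Finset.ssubset_iff_subset_ne.2 ⟨?_, fun h => ?_⟩)
        · exact hsD ▸ Finset.singleton_subset_iff.2 hsW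
        · have := hcard W hW
          rw [← h, hD1] at this
          omega
      · rw [← hsD, ← hMins]
        exact hMU

lemma insert_mem_fibS {s s' : α} (hs : s ∈ S) (hs' : s' ∈ S)
    (h : insert p {s} ∈ fibS p s' Tr) : s = s' := by
  obtain ⟨⟨hsub, hcard, _⟩, _⟩ := hTr
  have hps : p ∉ ({s} : Finset α) := by simp; exact fun h => hp (h ▸ hs)
  rcases mem_fibS.1 h with ⟨h1, _⟩ | ⟨W, hW, _, heq⟩ | heq
  · exact absurd (hsub _ h1 (Finset.mem_insert_self p _)) hp
  · have hpW : p ∉ W := fun h => hp (hsub W hW h)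
    have : ({s} : Finset α) = W := by
      rw [← Finset.erase_insert hps, heq, Finset.erase_insert hpW]
    have h2 := hcard W hW
    rw [← this, Finset.card_singleton] at h2
    omega
  · have hps' : p ∉ ({s'} : Finset α) := by simp; exact fun h => hp (h ▸ hs')
    have : ({s} : Finset α) = {s'} := by
      rw [← Finset.erase_insert hps, heq, Finset.erase_insert hps']
    simpa using this

lemma insert_mem_fibT {T T' : Finset α} {b' : Bool} (hT : T ∈ Tr) (hT' : T' ∈ Tr)
    (h : insert p T ∈ fibT p T' b' Tr) : T' ⊆ T := by
  obtain ⟨⟨hsub, hcard, _⟩, _⟩ := hTr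
  have hpT : p ∉ T := fun h => hp (hsub T hT h)
  rcases mem_fibT.1 h with ⟨h1, _⟩ | ⟨W, hW, hTW, heq⟩ | ⟨_, heq⟩
  · exact absurd (hsub _ h1 (Finset.mem_insert_self p _)) hp
  · have hpW : p ∉ W := fun h => hp (hsub W hW h)
    have : T = W := by
      rw [← Finset.erase_insert hpT, heq, Finset.erase_insert hpW]
    exact this ▸ hTW
  · exact absurd (heq ▸ Finset.mem_insert_self p T) (fun h => hp (hsub T' hT' h))

lemma self_mem_fibT_iff {T : Finset α} {b : Bool} (hT : T ∈ Tr) :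
    T ∈ fibT p T b Tr ↔ b = true := by
  obtain ⟨⟨hsub, hcard, _⟩, _⟩ := hTr
  have hpT : p ∉ T := fun h => hp (hsub T hT h)
  constructor
  · intro h
    rcases mem_fibT.1 h with ⟨_, h1⟩ | ⟨W, hW, _, heq⟩ | ⟨hb, _⟩
    · exact absurd (Finset.Subset.refl T) h1
    · exact absurd (heq ▸ Finset.mem_insert_self p W) hpT
    · exact hb
  · intro hb
    exact mem_fibT.2 (Or.inr (Or.inr ⟨hb, rfl⟩))

lemma fibS_ne_fibT {s : α} {T : Finset α} {b : Bool} (hs : s ∈ S) (hT : T ∈ Tr) :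
    fibS p s Tr ≠ fibT p T b Tr := by
  obtain ⟨⟨hsub, hcard, _⟩, _⟩ := hTr
  intro heq
  have h1 : insert p {s} ∈ fibS p s Tr := mem_fibS.2 (Or.inr (Or.inr rfl))
  rw [heq] at h1
  have hps : p ∉ ({s} : Finset α) := by simp; exact fun h => hp (h ▸ hs)
  rcases mem_fibT.1 h1 with ⟨h1, _⟩ | ⟨W, hW, _, heq'⟩ | ⟨_, heq'⟩
  · exact absurd (hsub _ h1 (Finset.mem_insert_self p _)) hp
  · have hpW : p ∉ W := fun h => hp (hsub W hW h)
    have hWs : ({s} : Finset α) = W := by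
      rw [← Finset.erase_insert hps, heq', Finset.erase_insert hpW]
    have := hcard W hW
    rw [← hWs] at this
    simp at this
  · exact absurd (heq' ▸ Finset.mem_insert_self p _) (fun h => hp (hsub T hT h))

end Fiber

/-- Lemma 7.4.6: for a finite set `S` with `|S| ≥ 2` and `S⁺ = S ⊔ {+}`, the map
`π : 𝕋_{S⁺} → 𝕋_S`, sending an `S⁺`-tree `𝓣` to `{V ∩ S : V ∈ 𝓣, |V ∩ S| ≥ 2}`,
has fibers of cardinality `2·|𝓣| + |S|` over every `S`-tree `𝓣`. -/
theorem stmt12 (S : Finset α) (hS : 2 ≤ S.card) (p : α) (hp : p ∉ S)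
    (Tr : Finset (Finset α)) (hTr : IsTree S Tr) :
    {U : Finset (Finset α) | IsTree (insert p S) U ∧
        (U.filter fun V => 2 ≤ (V ∩ S).card).image (fun V => V ∩ S) = Tr}.ncard
      = 2 * Tr.card + S.card := by
  classical
  set A := (S.image fun s => fibS p s Tr) ∪
    ((Tr ×ˢ (Finset.univ : Finset Bool)).image fun q => fibT p q.1 q.2 Tr) with hA
  have key : {U : Finset (Finset α) | IsTree (insert p S) U ∧
        (U.filter fun V => 2 ≤ (V ∩ S).card).image (fun V => V ∩ S) = Tr} = ↑A := by
    ext U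
    simp only [Set.mem_setOf_eq, hA, Finset.coe_union, Set.mem_union, Finset.coe_image,
      Set.mem_image, Finset.mem_coe, Finset.mem_product, Finset.mem_univ, and_true]
    constructor
    · rintro ⟨h1, h2⟩
      rcases classify hp hTr U h1 h2 with ⟨s, hs, rfl⟩ | ⟨T, hT, b, rfl⟩
      · exact Or.inl ⟨s, hs, rfl⟩
      · exact Or.inr ⟨(T, b), hT, rfl⟩
    · rintro (⟨s, hs, rfl⟩ | ⟨⟨T, b⟩, hT, rfl⟩)
      · exact fibS_in_fiber hp hTr s hs
      · exact fibT_in_fiber hp hTr T hT b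
  rw [key, Set.ncard_coe_finset]
  have hdisj : Disjoint (S.image fun s => fibS p s Tr)
      ((Tr ×ˢ (Finset.univ : Finset Bool)).image fun q => fibT p q.1 q.2 Tr) := by
    rw [Finset.disjoint_left]
    rintro X hX1 hX2
    obtain ⟨s, hs, rfl⟩ := Finset.mem_image.1 hX1
    obtain ⟨⟨T, b⟩, hTb, heq⟩ := Finset.mem_image.1 hX2
    exact fibS_ne_fibT hp hTr hs (Finset.mem_product.1 hTb).1 heq.symm
  have hinjS : Set.InjOn (fun s => fibS p s Tr) S := by
    intro s hs s' hs' heq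
    have heq' : fibS p s Tr = fibS p s' Tr := heq
    refine insert_mem_fibS hp hTr hs hs' ?_
    rw [← heq']
    exact mem_fibS.2 (Or.inr (Or.inr rfl))
  have hinjT : Set.InjOn (fun q : Finset α × Bool => fibT p q.1 q.2 Tr)
      (↑(Tr ×ˢ (Finset.univ : Finset Bool)) : Set (Finset α × Bool)) := by
    rintro ⟨T, b⟩ hTb ⟨T', b'⟩ hTb' heq0
    have heq : fibT p T b Tr = fibT p T' b' Tr := heq0
    have hT : T ∈ Tr := (Finset.mem_product.1 (Finset.mem_coe.1 hTb)).1
    have hT' : T' ∈ Tr := (Finset.mem_product.1 (Finset.mem_coe.1 hTb')).1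
    have hTT' : T = T' := by
      refine Finset.Subset.antisymm ?_ ?_
      · refine insert_mem_fibT (b' := b) hp hTr hT' hT ?_
        rw [heq]
        exact mem_fibT.2 (Or.inr (Or.inl ⟨T', (by exact hT'), Finset.Subset.refl _, rfl⟩))
      · refine insert_mem_fibT (b' := b') hp hTr hT hT' ?_
        rw [← heq]
        exact mem_fibT.2 (Or.inr (Or.inl ⟨T, hT, Finset.Subset.refl _, rfl⟩))
    subst hTT'
    have hbb : b = b' := by
      cases b <;> cases b' <;> try rfl
      · have : T ∈ fibT p T true Tr := (self_mem_fibT_iff hp hTr hT).2 rfl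
        rw [← heq] at this
        exact ((Bool.false_ne_true ((self_mem_fibT_iff hp hTr hT).1 this))).elim
      · have : T ∈ fibT p T true Tr := (self_mem_fibT_iff hp hTr hT).2 rfl
        rw [heq] at this
        exact ((Bool.false_ne_true ((self_mem_fibT_iff hp hTr hT).1 this))).elim
    rw [hbb]
  rw [hA, Finset.card_union_of_disjoint hdisj, Finset.card_image_of_injOn hinjS,
    Finset.card_image_of_injOn hinjT, Finset.card_product, Finset.card_univ]
  simp [Fintype.card_bool]
  omega
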